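/- arXiv:1404.2537 — 2 statements merged into one kernel-verified Lean document; each statement's English description precedes it below -/
import Mathlib

section
/- The quantity d_{T2} := 2·L_{T2}·|Ψ_{T22} \ Ψ_{T12}| + 2·max(0, min(L_{T2}·|Ψ_{T22} ∩ Ψ_{T12}|, (L_{T2}·|Ψ_{T12}| − L_{R1}·|Ψ_{R12}|)⁺ + L_{R1}·|Ψ_{R12} \ Ψ_{R11}|)) satisfies the identity d_{T2} = min(2·L_{T2}·|Ψ_{T22}|, d_sum − 2·L_{R1}·|Ψ_{R11}|). -/
open MeasureTheory Set

/-- Real-valued Lebesgue measure of a set of reals. -/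
noncomputable def μr (S : Set ℝ) : ℝ := (volume S).toReal


lemma μr_nonneg (s : Set ℝ) : 0 ≤ μr s := ENNReal.toReal_nonneg

lemma μr_split (s t : Set ℝ) (ht : MeasurableSet t) (hs : s ⊆ Icc (-1:ℝ) 1) :
    μr s = μr (s \ t) + μr (s ∩ t) := by
  have hfin : volume s ≠ ⊤ := by
    refine ne_top_of_le_ne_top ?_ (measure_mono hs)
    simp [Real.volume_Icc]
  unfold μr
  rw [← measure_diff_add_inter s ht]
  rw [ENNReal.toReal_add]
  · exact ne_top_of_le_ne_top hfin (measure_mono diff_subset)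
  · exact ne_top_of_le_ne_top hfin (measure_mono inter_subset_left)

theorem dT2_identity
    (L_T1 L_R1 L_T2 L_R2 : ℝ)
    (hLT1 : 0 ≤ L_T1) (hLR1 : 0 ≤ L_R1) (hLT2 : 0 ≤ L_T2) (hLR2 : 0 ≤ L_R2)
    (ΨT11 ΨT12 ΨT22 ΨR11 ΨR12 ΨR22 : Set ℝ)
    (hmT11 : MeasurableSet ΨT11) (hmT12 : MeasurableSet ΨT12)
    (hmT22 : MeasurableSet ΨT22) (hmR11 : MeasurableSet ΨR11)
    (hmR12 : MeasurableSet ΨR12) (hmR22 : MeasurableSet ΨR22)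
    (hsT11 : ΨT11 ⊆ Icc (-1) 1) (hsT12 : ΨT12 ⊆ Icc (-1) 1)
    (hsT22 : ΨT22 ⊆ Icc (-1) 1) (hsR11 : ΨR11 ⊆ Icc (-1) 1)
    (hsR12 : ΨR12 ⊆ Icc (-1) 1) (hsR22 : ΨR22 ⊆ Icc (-1) 1)
    (dsum dT2 : ℝ)
    (hdsum : dsum = 2 * L_T2 * μr (ΨT22 \ ΨT12) + 2 * L_R1 * μr (ΨR11 \ ΨR12)
        + 2 * max (L_T2 * μr ΨT12) (L_R1 * μr ΨR12))
    (hdT2 : dT2 = 2 * L_T2 * μr (ΨT22 \ ΨT12)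
        + 2 * max 0 (min (L_T2 * μr (ΨT22 ∩ ΨT12))
            (max (L_T2 * μr ΨT12 - L_R1 * μr ΨR12) 0 + L_R1 * μr (ΨR12 \ ΨR11)))) :
    dT2 = min (2 * L_T2 * μr ΨT22) (dsum - 2 * L_R1 * μr ΨR11) := by

  have hT22 := μr_split ΨT22 ΨT12 hmT12 hsT22
  have hR12 := μr_split ΨR12 ΨR11 hmR11 hsR12
  have hR11 := μr_split ΨR11 ΨR12 hmR12 hsR11
  set a := L_T2 * μr (ΨT22 \ ΨT12) with ha
  set b := L_T2 * μr (ΨT22 ∩ ΨT12) with hb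
  set T := L_T2 * μr ΨT12 with hT
  set R := L_R1 * μr ΨR12 with hR
  set c := L_R1 * μr (ΨR11 ∩ ΨR12) with hc
  set e := L_R1 * μr (ΨR12 \ ΨR11) with he
  have hce : R = e + c := by
    rw [hR, hR12, he, hc, inter_comm ΨR11 ΨR12]; ring
  have hrhs : dsum - 2 * L_R1 * μr ΨR11 = 2 * a + 2 * (max T R - c) := by
    rw [hdsum, hR11]; ring
  have hb0 : 0 ≤ b := mul_nonneg hLT2 (μr_nonneg _)
  have he0 : 0 ≤ e := mul_nonneg hLR1 (μr_nonneg _)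
  have hkey : max T R - c = max (T - R) 0 + e := by
    rcases le_total T R with h | h
    · rw [max_eq_right h, max_eq_right (by linarith)]; linarith
    · rw [max_eq_left h, max_eq_left (by linarith)]; linarith
  have hX0 : 0 ≤ max (T - R) 0 + e := by positivity
  have hT22' : 2 * L_T2 * μr ΨT22 = 2 * a + 2 * b := by rw [hT22]; ring
  rw [hdT2, hrhs, hkey, hT22',
    max_eq_right (le_min hb0 hX0)]
  rcases le_total b (max (T - R) 0 + e) with h | h
  · rw [min_eq_left h, min_eq_left (by linarith)]; rw [ha]; ring
  · rw [min_eq_right h, min_eq_right (by linarith)]; rw [ha]; ring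
end

section
/- The quantity δ_{R1} := 2·L_{R1}·|Ψ_{R11} \ Ψ_{R12}| + 2·min(L_{R1}·|Ψ_{R11} ∩ Ψ_{R12}|, L_{R1}·|Ψ_{R12}| − (L_{R2}·|Ψ_{R22}| − (L_{T2}·|Ψ_{T22} \ Ψ_{T12}| + (L_{T2}·|Ψ_{T12}| − L_{R1}·|Ψ_{R12}|)⁺))⁺) satisfies the identity δ_{R1} = min(2·L_{R1}·|Ψ_{R11}|, d_sum − 2·L_{R2}·|Ψ_{R22}|). -/
open MeasureTheory Set

set_option maxHeartbeats 2000000 in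
theorem deltaR1_identity
    (L_T1 L_R1 L_T2 L_R2 : ℝ)
    (hLT1 : 0 ≤ L_T1) (hLR1 : 0 ≤ L_R1) (hLT2 : 0 ≤ L_T2) (hLR2 : 0 ≤ L_R2)
    (ΨT11 ΨT12 ΨT22 ΨR11 ΨR12 ΨR22 : Set ℝ)
    (hmT11 : MeasurableSet ΨT11) (hmT12 : MeasurableSet ΨT12)
    (hmT22 : MeasurableSet ΨT22) (hmR11 : MeasurableSet ΨR11)
    (hmR12 : MeasurableSet ΨR12) (hmR22 : MeasurableSet ΨR22)
    (hsT11 : ΨT11 ⊆ Icc (-1) 1) (hsT12 : ΨT12 ⊆ Icc (-1) 1)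
    (hsT22 : ΨT22 ⊆ Icc (-1) 1) (hsR11 : ΨR11 ⊆ Icc (-1) 1)
    (hsR12 : ΨR12 ⊆ Icc (-1) 1) (hsR22 : ΨR22 ⊆ Icc (-1) 1)
    (dsum δR1 : ℝ)
    (hdsum : dsum = 2 * L_T2 * μr (ΨT22 \ ΨT12) + 2 * L_R1 * μr (ΨR11 \ ΨR12)
        + 2 * max (L_T2 * μr ΨT12) (L_R1 * μr ΨR12))
    (hδR1 : δR1 = 2 * L_R1 * μr (ΨR11 \ ΨR12)
        + 2 * min (L_R1 * μr (ΨR11 ∩ ΨR12))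
            (L_R1 * μr ΨR12 - max (L_R2 * μr ΨR22
              - (L_T2 * μr (ΨT22 \ ΨT12) + max (L_T2 * μr ΨT12 - L_R1 * μr ΨR12) 0)) 0))
    :
    δR1 = min (2 * L_R1 * μr ΨR11) (dsum - 2 * L_R2 * μr ΨR22) := by

  have hfin : volume ΨR11 ≠ ⊤ := by
    refine ne_top_of_le_ne_top ?_ (measure_mono hsR11)
    simp [Real.volume_Icc]
  have hfin12 : volume ΨR12 ≠ ⊤ := by
    refine ne_top_of_le_ne_top ?_ (measure_mono hsR12)
    simp [Real.volume_Icc]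
  have hsplit : μr ΨR11 = μr (ΨR11 \ ΨR12) + μr (ΨR11 ∩ ΨR12) := by
    unfold μr
    rw [← ENNReal.toReal_add (ne_top_of_le_ne_top hfin (measure_mono Set.diff_subset))
      (ne_top_of_le_ne_top hfin (measure_mono Set.inter_subset_left))]
    rw [measure_diff_add_inter _ hmR12]
  have hbc : μr (ΨR11 ∩ ΨR12) ≤ μr ΨR12 := by
    unfold μr
    exact ENNReal.toReal_mono hfin12 (measure_mono Set.inter_subset_right)
  have hbc' : L_R1 * μr (ΨR11 ∩ ΨR12) ≤ L_R1 * μr ΨR12 :=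
    mul_le_mul_of_nonneg_left hbc hLR1
  have hT : 0 ≤ L_T2 * μr (ΨT22 \ ΨT12) := by
    apply mul_nonneg hLT2
    exact ENNReal.toReal_nonneg
  rw [hδR1, hdsum, hsplit]
  set A := L_R1 * μr (ΨR11 \ ΨR12) with hA
  set B := L_R1 * μr (ΨR11 ∩ ΨR12) with hB
  set C := L_R1 * μr ΨR12 with hC
  set T := L_T2 * μr (ΨT22 \ ΨT12) with hTT
  set P := L_T2 * μr ΨT12 with hP
  set R := L_R2 * μr ΨR22 with hR
  have hgoal : 2 * L_R1 * (μr (ΨR11 \ ΨR12) + μr (ΨR11 ∩ ΨR12)) = 2 * A + 2 * B := by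
    rw [hA, hB]; ring
  rw [hgoal]
  clear_value A B C T P R
  rcases le_total P C with h1 | h1 <;>
    rcases le_total R (T + max (P - C) 0) with h2 | h2 <;>
    simp only [min_def, max_def] <;> split_ifs <;> linarith
end
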